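/- arXiv:1911.01372 — 3 statements merged into one kernel-verified Lean document; each statement's English description precedes it below -/
import Mathlib

section
/- Suppose a₁₂ ≠ 0. If t ↦ (x₁(t), x₂(t)) is a solution of system (1), then t ↦ (x(t), y(t)) := (x₁(t), a₂₂ x₁(t) − a₁₂ x₂(t) − b₁) is a solution of the Liénard system (2) with parameters T_L = tr(A_L), T_R = tr(A_R), D_L = det(A_L), D_R = det(A_R), and a = a₁₂ b₂ − a₂₂ b₁. -/
noncomputable section

/-- The piecewise linear vector field of system (1):
`ẋ = A_L x + b` if `x₁ ≤ 0` and `ẋ = A_R x + b` if `x₁ ≥ 0`. -/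
def pwVF (AL AR : Matrix (Fin 2) (Fin 2) ℝ) (b : Fin 2 → ℝ) (x : Fin 2 → ℝ) : Fin 2 → ℝ :=
  if x 0 ≤ 0 then AL.mulVec x + b else AR.mulVec x + b

/-- The continuous piecewise linear Liénard vector field of system (2). -/
def lienardVF (TL TR DL DR a : ℝ) (p : ℝ × ℝ) : ℝ × ℝ :=
  if p.1 ≤ 0 then (TL * p.1 - p.2, DL * p.1 - a) else (TR * p.1 - p.2, DR * p.1 - a)

/-- When `a₁₂ ≠ 0`, the linear change of variables
`(x, y) = (x₁, a₂₂ x₁ - a₁₂ x₂ - b₁)` transforms solutions of system (1) into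
solutions of the Liénard system (2) with parameters `T_L = tr A_L`, `T_R = tr A_R`,
`D_L = det A_L`, `D_R = det A_R`, and `a = a₁₂ b₂ - a₂₂ b₁`. -/
theorem lienard_change_of_variables (AL AR : Matrix (Fin 2) (Fin 2) ℝ) (b : Fin 2 → ℝ)
    (h12 : AL 0 1 = AR 0 1) (h22 : AL 1 1 = AR 1 1) (ha12 : AL 0 1 ≠ 0)
    (u : ℝ → Fin 2 → ℝ) (hsol : ∀ t, HasDerivAt u (pwVF AL AR b (u t)) t) :
    ∀ t, HasDerivAt (fun s => ((u s 0, AL 1 1 * u s 0 - AL 0 1 * u s 1 - b 0) : ℝ × ℝ))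
      (lienardVF AL.trace AR.trace AL.det AR.det (AL 0 1 * b 1 - AL 1 1 * b 0)
        (u t 0, AL 1 1 * u t 0 - AL 0 1 * u t 1 - b 0)) t := by
  intro t
  have h := hsol t
  rw [hasDerivAt_pi] at h
  have h0 := h 0
  have h1 := h 1
  have hy : HasDerivAt (fun s => AL 1 1 * u s 0 - AL 0 1 * u s 1 - b 0)
      (AL 1 1 * pwVF AL AR b (u t) 0 - AL 0 1 * pwVF AL AR b (u t) 1) t :=
    ((h0.const_mul (AL 1 1)).sub (h1.const_mul (AL 0 1))).sub_const (b 0)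
  have hd := h0.prodMk hy
  convert hd using 1
  unfold pwVF lienardVF
  by_cases hle : u t 0 ≤ 0 <;>
    simp only [hle, if_true, if_false, Pi.add_apply, Matrix.mulVec, dotProduct,
      Fin.sum_univ_two, Matrix.trace_fin_two, Matrix.det_fin_two] <;>
    exact Prod.ext (by simp only [h12, h22]; ring) (by simp only [h12, h22]; ring)
end
end

section
/- A limit cycle of system (2) cannot be entirely contained in the closed left half-plane {(x,y) : x ≤ 0}, nor entirely contained in the closed right half-plane {(x,y) : x ≥ 0}. Equivalently, every limit cycle of system (2) intersects both open half-planes {x < 0} and {x > 0}. -/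
open Set Metric Filter

noncomputable section

/-- `x : ℝ → E` is a (global) solution of the autonomous ODE `ẋ = f(x)`. -/
def IsSolution {E : Type*} [NormedAddCommGroup E] [NormedSpace ℝ E]
    (f : E → E) (x : ℝ → E) : Prop :=
  ∀ t, HasDerivAt x (f (x t)) t

/-- A periodic orbit: the image (range) of a nonconstant periodic solution. -/
def IsPeriodicOrbit {E : Type*} [NormedAddCommGroup E] [NormedSpace ℝ E]
    (f : E → E) (Γ : Set E) : Prop :=
  ∃ x : ℝ → E, IsSolution f x ∧ (∃ T > 0, Function.Periodic x T) ∧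
    (¬ ∃ c, ∀ t, x t = c) ∧ Γ = Set.range x

/-- A limit cycle: an isolated periodic orbit, i.e. a periodic orbit having a
neighborhood containing no other periodic orbit. -/
def IsLimitCycle {E : Type*} [NormedAddCommGroup E] [NormedSpace ℝ E]
    (f : E → E) (Γ : Set E) : Prop :=
  IsPeriodicOrbit f Γ ∧
    ∃ U : Set E, IsOpen U ∧ Γ ⊆ U ∧
      ∀ Γ' : Set E, IsPeriodicOrbit f Γ' → Γ' ⊆ U → Γ' = Γ

lemma no_lc_affine (c1 c2 a σ : ℝ) (f : ℝ × ℝ → ℝ × ℝ)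
    (hf : ∀ p : ℝ × ℝ, 0 ≤ σ * p.1 → f p = (c1 * p.1 - p.2, c2 * p.1 - a))
    (Γ : Set (ℝ × ℝ)) (h : IsLimitCycle f Γ) (hΓ : ∀ p ∈ Γ, 0 ≤ σ * p.1) : False := by
  obtain ⟨⟨z, hsol, ⟨T, hT, hper⟩, hnc, rfl⟩, U, hUo, hΓU, hiso⟩ := h
  have hsign : ∀ t, 0 ≤ σ * (z t).1 := fun t => hΓ _ (mem_range_self t)
  have hcz : Continuous z := continuous_iff_continuousAt.2 fun t => (hsol t).continuousAt
  have hcz1 : Continuous fun t => (z t).1 := continuous_fst.comp hcz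
  have hcz2 : Continuous fun t => (z t).2 := continuous_snd.comp hcz
  -- derivative of components
  have hd : ∀ t, HasDerivAt z (c1 * (z t).1 - (z t).2, c2 * (z t).1 - a) t := by
    intro t; have := hsol t; rwa [hf _ (hsign t)] at this
  have hd1 : ∀ t, HasDerivAt (fun t => (z t).1) (c1 * (z t).1 - (z t).2) t :=
    fun t => (hd t).fst
  have hd2 : ∀ t, HasDerivAt (fun t => (z t).2) (c2 * (z t).1 - a) t :=
    fun t => (hd t).snd
  have hzT : z T = z 0 := by simpa using hper 0
  -- integrals
  set I1 : ℝ := ∫ t in (0:ℝ)..T, (z t).1 with hI1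
  set I2 : ℝ := ∫ t in (0:ℝ)..T, (z t).2 with hI2
  have hint1 : (∫ t in (0:ℝ)..T, (c1 * (z t).1 - (z t).2)) = 0 := by
    rw [intervalIntegral.integral_eq_sub_of_hasDerivAt (fun t _ => hd1 t)
      (((continuous_const.mul hcz1).sub hcz2).intervalIntegrable 0 T)]
    rw [hzT]; ring
  have hint2 : (∫ t in (0:ℝ)..T, (c2 * (z t).1 - a)) = 0 := by
    rw [intervalIntegral.integral_eq_sub_of_hasDerivAt (fun t _ => hd2 t)
      (((continuous_const.mul hcz1).sub continuous_const).intervalIntegrable 0 T)]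
    rw [hzT]; ring
  have heq1 : c1 * I1 - I2 = 0 := by
    rw [hI1, hI2, ← intervalIntegral.integral_const_mul, ← intervalIntegral.integral_sub
      (Continuous.intervalIntegrable (u := fun t => c1 * (z t).1) (continuous_const.mul hcz1) 0 T) (hcz2.intervalIntegrable 0 T)]
    exact hint1
  have heq2 : c2 * I1 - a * T = 0 := by
    have := hint2
    rw [intervalIntegral.integral_sub (Continuous.intervalIntegrable (u := fun t => c2 * (z t).1) (continuous_const.mul hcz1) 0 T)
      (intervalIntegrable_const), intervalIntegral.integral_const_mul,
      intervalIntegral.integral_const] at this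
    simp at this; linarith [this]
  set xb : ℝ := I1 / T with hxb
  set yb : ℝ := I2 / T with hyb
  have hTne : T ≠ 0 := ne_of_gt hT
  have hequi1 : c1 * xb - yb = 0 := by
    rw [hxb, hyb]; field_simp; linarith [heq1]
  have hequi2 : c2 * xb - a = 0 := by
    rw [hxb]; field_simp; linarith [heq2]
  have hxbsign : 0 ≤ σ * xb := by
    have h0 : 0 ≤ ∫ t in (0:ℝ)..T, σ * (z t).1 :=
      intervalIntegral.integral_nonneg (le_of_lt hT) (fun t _ => hsign t)
    rw [intervalIntegral.integral_const_mul] at h0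
    rw [hxb, ← mul_div_assoc]
    exact div_nonneg h0 (le_of_lt hT)
  set pb : ℝ × ℝ := (xb, yb) with hpb
  -- maximum of distance to pb over a period
  obtain ⟨ts, hts, htsmax⟩ := isCompact_Icc.exists_isMaxOn (nonempty_Icc.2 (le_of_lt hT))
    (Continuous.continuousOn (by fun_prop : Continuous fun t => dist (z t) pb))
  set R : ℝ := dist (z ts) pb with hR
  have hbound : ∀ t, dist (z t) pb ≤ R := by
    intro t
    obtain ⟨y, hy, hzy⟩ := hper.exists_mem_Ico₀ hT t
    rw [hzy]
    exact htsmax (Ico_subset_Icc_self hy)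
  have hRpos : 0 < R := by
    rcases lt_or_ge 0 R with hc | hc
    · exact hc
    · exfalso
      exact hnc ⟨pb, fun t =>
        dist_eq_zero.mp (le_antisymm (le_trans (hbound t) hc) dist_nonneg)⟩
  -- compactness of Γ and thickening inside U
  have hΓeq : range z = z '' Icc 0 T := by
    apply Subset.antisymm
    · rintro p ⟨t, rfl⟩
      obtain ⟨y, hy, hzy⟩ := hper.exists_mem_Ico₀ hT t
      exact ⟨y, Ico_subset_Icc_self hy, hzy.symm⟩
    · rintro p ⟨t, _, rfl⟩; exact mem_range_self t
  have hΓc : IsCompact (range z) := hΓeq ▸ isCompact_Icc.image hcz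
  obtain ⟨δ, hδ, hthick⟩ := hΓc.exists_thickening_subset_open hUo hΓU
  -- choose lam
  set m : ℝ := min (1/2) (δ / (2 * R)) with hm
  have hm0 : 0 < m := lt_min (by norm_num) (div_pos hδ (by linarith))
  have hm1 : m ≤ 1/2 := min_le_left _ _
  set lam : ℝ := 1 - m with hlam
  have hlam0 : 0 < lam := by rw [hlam]; linarith
  have hlam1 : lam < 1 := by rw [hlam]; linarith
  -- the scaled solution
  set w : ℝ → ℝ × ℝ := fun t => pb + lam • (z t - pb) with hw
  have hw1 : ∀ t, (w t).1 = xb + lam * ((z t).1 - xb) := fun t => rfl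
  have hw2 : ∀ t, (w t).2 = yb + lam * ((z t).2 - yb) := fun t => rfl
  have hwsign : ∀ t, 0 ≤ σ * (w t).1 := by
    intro t
    rw [hw1]
    have h1 := hsign t
    nlinarith [hxbsign, hlam0.le, hlam1.le]
  have hwsol : IsSolution f w := by
    intro t
    have hder : HasDerivAt w (lam • (c1 * (z t).1 - (z t).2, c2 * (z t).1 - a)) t :=
      (((hd t).sub_const pb).const_smul lam).const_add pb
    have : f (w t) = lam • (c1 * (z t).1 - (z t).2, c2 * (z t).1 - a) := by
      rw [hf _ (hwsign t)]
      rw [Prod.ext_iff]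
      constructor
      · simp only [hw1 t, hw2 t, Prod.smul_fst, smul_eq_mul]
        linear_combination (1 - lam) * hequi1
      · simp only [hw1 t, Prod.smul_snd, smul_eq_mul]
        linear_combination (1 - lam) * hequi2
    rw [this]; exact hder
  have hwper : Function.Periodic w T := by
    intro t; simp only [hw]; rw [hper t]
  have hwnc : ¬ ∃ c, ∀ t, w t = c := by
    rintro ⟨c, hc⟩
    apply hnc
    refine ⟨pb + lam⁻¹ • (c - pb), fun t => ?_⟩
    have := hc t
    rw [hw] at this
    have h2 : lam • (z t - pb) = c - pb := by
      have := congrArg (· - pb) this; simpa using this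
    have h3 : z t - pb = lam⁻¹ • (c - pb) := by
      rw [← h2, smul_smul, inv_mul_cancel₀ (ne_of_gt hlam0), one_smul]
    have := congrArg (· + pb) h3
    simp at this
    rw [Prod.ext_iff] at this ⊢
    constructor
    · simp [Prod.ext_iff] at this ⊢; linarith [this.1]
    · simp [Prod.ext_iff] at this ⊢; linarith [this.2]
  have hwdist : ∀ t, dist (w t) (z t) = m * dist (z t) pb := by
    intro t
    rw [dist_eq_norm, dist_eq_norm]
    have : w t - z t = (-m) • (z t - pb) := by
      rw [hw]; module
    rw [this, norm_smul]
    simp [abs_of_pos hm0]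
  have hwU : range w ⊆ U := by
    rintro p ⟨t, rfl⟩
    apply hthick
    rw [mem_thickening_iff]
    refine ⟨z t, mem_range_self t, ?_⟩
    calc dist (w t) (z t) = m * dist (z t) pb := hwdist t
      _ ≤ m * R := by nlinarith [hbound t, hm0.le]
      _ ≤ (δ / (2 * R)) * R := by nlinarith [min_le_right (1/2 : ℝ) (δ / (2*R)), hbound t, dist_nonneg (x := z t) (y := pb)]
      _ < δ := by rw [div_mul_eq_mul_div]; rw [div_lt_iff₀ (by linarith)]; nlinarith
  have horb : IsPeriodicOrbit f (range w) := ⟨w, hwsol, ⟨T, hT, hwper⟩, hwnc, rfl⟩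
  have hrweq : range w = range z := hiso _ horb hwU
  -- contradiction: z ts is at distance R from pb but all points of range w are closer
  have : z ts ∈ range w := hrweq ▸ mem_range_self ts
  obtain ⟨t', ht'⟩ := this
  have hdw : dist (w t') pb = lam * dist (z t') pb := by
    rw [dist_eq_norm, dist_eq_norm]
    have : w t' - pb = lam • (z t' - pb) := by rw [hw]; module
    rw [this, norm_smul]
    simp [abs_of_pos hlam0]
  rw [ht'] at hdw
  have hfin : R ≤ lam * R := by
    calc R = dist (z ts) pb := hR
      _ = lam * dist (z t') pb := hdw
      _ ≤ lam * R := by nlinarith [hbound t', hlam0.le]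
  nlinarith

/-- A limit cycle of system (2) cannot be contained in the closed left half-plane nor
in the closed right half-plane: it meets both open half-planes `{x < 0}` and `{x > 0}`. -/
theorem limit_cycle_meets_both_zones (TL TR DL DR a : ℝ) (Γ : Set (ℝ × ℝ))
    (h : IsLimitCycle (lienardVF TL TR DL DR a) Γ) :
    (∃ p ∈ Γ, p.1 < 0) ∧ (∃ p ∈ Γ, 0 < p.1) := by
  constructor
  · by_contra hc
    push_neg at hc
    refine no_lc_affine TR DR a 1 _ ?_ Γ h ?_
    · intro p hp
      have hp' : 0 ≤ p.1 := by linarith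
      unfold lienardVF
      by_cases h0 : p.1 ≤ 0
      · have hz : p.1 = 0 := le_antisymm h0 hp'
        rw [if_pos h0, hz]; norm_num
      · rw [if_neg h0]
    · intro p hp
      have := hc p hp; linarith
  · by_contra hc
    push_neg at hc
    refine no_lc_affine TL DL a (-1) _ ?_ Γ h ?_
    · intro p hp
      have hp' : p.1 ≤ 0 := by nlinarith
      unfold lienardVF
      rw [if_pos hp']
    · intro p hp
      have := hc p hp; nlinarith
end
end

section
/- Let y₀* > 0, y₁* < 0 be real numbers with W_L(y₀*) ≠ 0, W_R(y₀*) ≠ 0. Then the quantities d_L := (y₀* W_L(y₁*))/(y₁* W_L(y₀*)) and d_R := (y₀* W_R(y₁*))/(y₁* W_R(y₀*)) satisfy d_R − d_L = C(y₀*, y₁*)·F(y₀*, y₁*), where C(y₀,y₁) = −y₀(y₀ − y₁)/(y₁ W_R(y₀) W_L(y₀)). Consequently, if additionally W_L(y₀*) > 0 and W_R(y₀*) > 0, then C(y₀*, y₁*) > 0, so the sign of d_R − d_L equals the sign of F(y₀*, y₁*). -/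
noncomputable section

/-- The quadratic polynomial `W(y) = D y² - a T y + a²` (this is `W_L` for
`(D,T) = (D_L,T_L)` and `W_R` for `(D,T) = (D_R,T_R)`). -/
def W (D T a y : ℝ) : ℝ := D * y ^ 2 - a * T * y + a ^ 2

/-- The quadratic function
`F(y₀,y₁) = a³(T_L - T_R) + a(D_L T_R - D_R T_L) y₀ y₁ + a²(D_R - D_L)(y₀ + y₁)`. -/
def Fq (TL TR DL DR a y₀ y₁ : ℝ) : ℝ :=
  a ^ 3 * (TL - TR) + a * (DL * TR - DR * TL) * y₀ * y₁ + a ^ 2 * (DR - DL) * (y₀ + y₁)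

/-- The derivative of the displacement function factorizes:
`d_R - d_L = C(y₀*,y₁*) F(y₀*,y₁*)` where
`d_L = y₀* W_L(y₁*) / (y₁* W_L(y₀*))`, `d_R = y₀* W_R(y₁*) / (y₁* W_R(y₀*))` and
`C(y₀,y₁) = -y₀ (y₀ - y₁) / (y₁ W_R(y₀) W_L(y₀))`; moreover, if `W_L(y₀*) > 0` and
`W_R(y₀*) > 0`, then `C(y₀*,y₁*) > 0` and the sign of `d_R - d_L` is the sign of `F`. -/
theorem displacement_derivative_sign (TL TR DL DR a y₀ y₁ : ℝ)
    (hy₀ : 0 < y₀) (hy₁ : y₁ < 0)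
    (hL : W DL TL a y₀ ≠ 0) (hR : W DR TR a y₀ ≠ 0) :
    (y₀ * W DR TR a y₁ / (y₁ * W DR TR a y₀) - y₀ * W DL TL a y₁ / (y₁ * W DL TL a y₀))
      = (-(y₀ * (y₀ - y₁)) / (y₁ * W DR TR a y₀ * W DL TL a y₀)) * Fq TL TR DL DR a y₀ y₁ ∧
    (0 < W DL TL a y₀ → 0 < W DR TR a y₀ →
      0 < -(y₀ * (y₀ - y₁)) / (y₁ * W DR TR a y₀ * W DL TL a y₀) ∧
      Real.sign (y₀ * W DR TR a y₁ / (y₁ * W DR TR a y₀)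
          - y₀ * W DL TL a y₁ / (y₁ * W DL TL a y₀))
        = Real.sign (Fq TL TR DL DR a y₀ y₁)) := by
  have hy₁' : y₁ ≠ 0 := ne_of_lt hy₁
  have key : (y₀ * W DR TR a y₁ / (y₁ * W DR TR a y₀) - y₀ * W DL TL a y₁ / (y₁ * W DL TL a y₀))
      = (-(y₀ * (y₀ - y₁)) / (y₁ * W DR TR a y₀ * W DL TL a y₀)) * Fq TL TR DL DR a y₀ y₁ := by
    have hRd : y₁ * W DR TR a y₀ ≠ 0 := mul_ne_zero hy₁' hR
    have hLd : y₁ * W DL TL a y₀ ≠ 0 := mul_ne_zero hy₁' hL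
    rw [div_sub_div _ _ hRd hLd, div_mul_eq_mul_div,
      div_eq_div_iff (mul_ne_zero hRd hLd) (mul_ne_zero hRd hL)]
    simp only [W, Fq]
    ring
  refine ⟨key, fun hL0 hR0 => ?_⟩
  have hC : 0 < -(y₀ * (y₀ - y₁)) / (y₁ * W DR TR a y₀ * W DL TL a y₀) := by
    apply div_pos_of_neg_of_neg
    · nlinarith
    · have : y₁ * W DR TR a y₀ < 0 := mul_neg_of_neg_of_pos hy₁ hR0
      exact mul_neg_of_neg_of_pos this hL0
  refine ⟨hC, ?_⟩
  rw [key]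
  set C := -(y₀ * (y₀ - y₁)) / (y₁ * W DR TR a y₀ * W DL TL a y₀)
  set F := Fq TL TR DL DR a y₀ y₁
  rcases lt_trichotomy F 0 with h | h | h
  · rw [Real.sign_of_neg h, Real.sign_of_neg (mul_neg_of_pos_of_neg hC h)]
  · rw [h, mul_zero]
  · rw [Real.sign_of_pos h, Real.sign_of_pos (mul_pos hC h)]
end
end
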